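/- arXiv:2206.05682 — 4 statements merged into one kernel-verified Lean document; each statement's English description precedes it below -/
import Mathlib

section
/- Let f₁,...,fₙ ∈ [0,1] with mean f̄ and empirical variance Varₙ = (1/n)∑(fᵢ − f̄)² satisfying Varₙ ≥ λ/n for some λ > 0. Then the maximum of ∑ᵢ pᵢ fᵢ over probability vectors p (pᵢ ≥ 0, ∑pᵢ = 1) satisfying ∑ᵢ(pᵢ − 1/n)² ≤ λ/n² equals f̄ + √(λ·Varₙ/n). -/
open Finset

theorem drbl_chi_squared_max (n : ℕ) (hn : 1 ≤ n) (lam : ℝ) (hlam : 0 < lam)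
    (f : Fin n → ℝ) (hf : ∀ i, f i ∈ Set.Icc (0 : ℝ) 1)
    (fbar : ℝ) (hfbar : fbar = (∑ i, f i) / n)
    (Varn : ℝ) (hVarn : Varn = (∑ i, (f i - fbar) ^ 2) / n)
    (hV : lam / n ≤ Varn) :
    IsGreatest
      {s : ℝ | ∃ p : Fin n → ℝ, (∀ i, 0 ≤ p i) ∧ (∑ i, p i = 1) ∧
        (∑ i, (p i - 1 / n) ^ 2 ≤ lam / (n : ℝ) ^ 2) ∧ s = ∑ i, p i * f i}
      (fbar + Real.sqrt (lam * Varn / n)) := by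
  have hn0 : (0 : ℝ) < n := by exact_mod_cast hn
  have hn0' : (n : ℝ) ≠ 0 := ne_of_gt hn0
  have hVpos : 0 < Varn := lt_of_lt_of_le (div_pos hlam hn0) hV
  -- sum of deviations is zero
  have hsumg : ∑ i, (f i - fbar) = 0 := by
    rw [Finset.sum_sub_distrib, Finset.sum_const, Finset.card_univ, Fintype.card_fin,
      nsmul_eq_mul, hfbar]
    field_simp; ring
  have hS : ∑ i, (f i - fbar) ^ 2 = n * Varn := by
    rw [hVarn]; field_simp
  have hfbar0 : 0 ≤ fbar := by
    rw [hfbar]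
    exact div_nonneg (Finset.sum_nonneg fun i _ => (hf i).1) hn0.le
  have hfbar1 : fbar ≤ 1 := by
    rw [hfbar, div_le_one hn0]
    calc ∑ i, f i ≤ ∑ _i : Fin n, (1 : ℝ) := Finset.sum_le_sum fun i _ => (hf i).2
    _ = n := by simp
  have hgabs : ∀ i, |f i - fbar| ≤ 1 := by
    intro i
    rw [abs_le]
    constructor <;> nlinarith [(hf i).1, (hf i).2]
  have hlamnV : lam ≤ n * Varn := by
    have := (div_le_iff₀ hn0).mp hV
    linarith
  have hnV0 : 0 < n * Varn := by positivity
  have hsq : Real.sqrt (lam * Varn / n) = Real.sqrt lam * Real.sqrt (n * Varn) / n := by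
    have h : lam * Varn / n = (Real.sqrt lam * Real.sqrt (n * Varn) / n) ^ 2 := by
      rw [div_pow, mul_pow, Real.sq_sqrt hlam.le, Real.sq_sqrt hnV0.le]
      field_simp
    rw [h, Real.sqrt_sq (by positivity)]
  constructor
  · -- membership: construct the maximizer
    set c : ℝ := Real.sqrt lam / (n * Real.sqrt (n * Varn)) with hc
    have hsnV : 0 < Real.sqrt (n * Varn) := Real.sqrt_pos.mpr hnV0
    have hc0 : 0 ≤ c := by positivity
    have hcbound : c ≤ 1 / n := by
      rw [hc, div_le_div_iff₀ (by positivity) hn0]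
      have h1 : Real.sqrt lam ≤ Real.sqrt (n * Varn) := Real.sqrt_le_sqrt hlamnV
      nlinarith [Real.sqrt_nonneg lam]
    refine ⟨fun i => 1 / n + c * (f i - fbar), ?_, ?_, ?_, ?_⟩
    · intro i
      have := hgabs i
      have h1 : c * (f i - fbar) ≥ -(c * 1) := by
        have : -(1:ℝ) ≤ f i - fbar := (abs_le.mp (hgabs i)).1
        nlinarith
      have : c * 1 ≤ 1 / n := by linarith [hcbound]
      linarith
    · rw [Finset.sum_add_distrib, ← Finset.mul_sum, hsumg, Finset.sum_const,
        Finset.card_univ, Fintype.card_fin, nsmul_eq_mul]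
      field_simp; ring
    · have : ∑ i, (1 / (n:ℝ) + c * (f i - fbar) - 1 / n) ^ 2 = c ^ 2 * (n * Varn) := by
        rw [← hS, Finset.mul_sum]
        apply Finset.sum_congr rfl
        intro i _
        ring
      have heq : c ^ 2 * (n * Varn) = lam / (n:ℝ)^2 := by
        rw [hc, div_pow, mul_pow, Real.sq_sqrt hlam.le, Real.sq_sqrt hnV0.le]
        field_simp
      rw [this, heq]
    · have key : ∑ i, (1 / (n:ℝ) + c * (f i - fbar)) * f i
          = fbar + c * (n * Varn) := by
        have expand : ∀ i, (1 / (n:ℝ) + c * (f i - fbar)) * f i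
            = f i / n + c * (f i - fbar)^2 + c * fbar * (f i - fbar) := by
          intro i; ring
        simp_rw [expand]
        rw [Finset.sum_add_distrib, Finset.sum_add_distrib, ← Finset.mul_sum,
          ← Finset.mul_sum, hsumg, hS, ← Finset.sum_div, ← hfbar]
        ring
      have hmul : Real.sqrt (n * Varn) * Real.sqrt (n * Varn) = n * Varn :=
        Real.mul_self_sqrt hnV0.le
      have key2 : c * (n * Varn) = Real.sqrt lam * Real.sqrt (n * Varn) / n := by
        rw [hc, ← hmul]
        field_simp
        ring
        rw [Real.sqrt_sq hsnV.le]
      rw [key, key2, hsq]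
  · -- upper bound
    rintro s ⟨p, hp0, hp1, hpc, rfl⟩
    have hdecomp : ∑ i, p i * f i
        = fbar + ∑ i, (p i - 1 / n) * (f i - fbar) := by
      have expand : ∀ i, (p i - 1 / (n:ℝ)) * (f i - fbar)
          = p i * f i - fbar * p i - f i / n + fbar / n := by
        intro i; ring
      simp_rw [expand]
      rw [Finset.sum_add_distrib, Finset.sum_sub_distrib, Finset.sum_sub_distrib,
        ← Finset.mul_sum, hp1, ← Finset.sum_div, ← hfbar, Finset.sum_const,
        Finset.card_univ, Fintype.card_fin, nsmul_eq_mul]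
      field_simp; ring
    rw [hdecomp]
    have cs := Finset.sum_mul_sq_le_sq_mul_sq Finset.univ
      (fun i => p i - 1 / n) (fun i => f i - fbar)
    have h1 : (∑ i, (p i - 1 / (n:ℝ)) * (f i - fbar)) ^ 2
        ≤ lam / (n:ℝ)^2 * (n * Varn) := by
      calc (∑ i, (p i - 1 / (n:ℝ)) * (f i - fbar)) ^ 2
          ≤ (∑ i, (p i - 1/(n:ℝ))^2) * ∑ i, (f i - fbar)^2 := cs
        _ ≤ lam / (n:ℝ)^2 * (n * Varn) := by
            rw [hS]
            apply mul_le_mul_of_nonneg_right hpc hnV0.le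
    have h2 : lam / (n:ℝ)^2 * (n * Varn) = lam * Varn / n := by
      field_simp
    rw [h2] at h1
    have h3 : ∑ i, (p i - 1 / (n:ℝ)) * (f i - fbar) ≤ Real.sqrt (lam * Varn / n) := by
      have h4 := Real.sqrt_le_sqrt h1
      rw [Real.sqrt_sq_eq_abs] at h4
      exact (le_abs_self _).trans h4
    linarith
end

section
/- Let f₁,...,fₙ ∈ [0,1]. If min_{i} √λ·(fᵢ − f̄)/√(n·Varₙ) ≥ −1, then the maximum of pᵀf over the set {p ∈ ℝⁿ : p ≥ 0, ∑pᵢ = 1, ‖p − 𝟙/n‖₂² ≤ λ/n²} equals f̄ + √(λ·Varₙ/n), where f̄ is the mean and Varₙ > 0 is the empirical variance of the fᵢ. -/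
open Finset

theorem drbl_max_under_min_condition (n : ℕ) (hn : 2 ≤ n) (lam : ℝ) (hlam : 0 < lam)
    (f : Fin n → ℝ) (hf : ∀ i, f i ∈ Set.Icc (0 : ℝ) 1)
    (fbar : ℝ) (hfbar : fbar = (∑ i, f i) / n)
    (Varn : ℝ) (hVarn : Varn = (∑ i, (f i - fbar) ^ 2) / n) (hVpos : 0 < Varn)
    (hmin : ∀ i, Real.sqrt lam * (f i - fbar) / Real.sqrt (n * Varn) ≥ -1) :
    IsGreatest
      {s : ℝ | ∃ p : Fin n → ℝ, (∀ i, 0 ≤ p i) ∧ (∑ i, p i = 1) ∧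
        (∑ i, (p i - 1 / n) ^ 2 ≤ lam / (n : ℝ) ^ 2) ∧ s = ∑ i, p i * f i}
      (fbar + Real.sqrt (lam * Varn / n)) := by
  have hn0 : (0:ℝ) < n := by
    have : (2:ℝ) ≤ n := by exact_mod_cast hn
    linarith
  have hA : (0:ℝ) < n * Varn := mul_pos hn0 hVpos
  set sA := Real.sqrt (n * Varn) with hsAdef
  have hsA : 0 < sA := Real.sqrt_pos.mpr hA
  have hsAsq : sA ^ 2 = n * Varn := Real.sq_sqrt hA.le
  have hlsq : Real.sqrt lam ^ 2 = lam := Real.sq_sqrt hlam.le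
  have hsum_f : ∑ i, f i = n * fbar := by rw [hfbar]; field_simp
  have hsum_dev : ∑ i, (f i - fbar) = 0 := by
    rw [Finset.sum_sub_distrib, hsum_f, Finset.sum_const, card_univ, Fintype.card_fin]
    push_cast; ring
  have hsum_sq : ∑ i, (f i - fbar) ^ 2 = n * Varn := by rw [hVarn]; field_simp
  have hsqrt_eq : Real.sqrt (lam * Varn / n) = Real.sqrt lam * sA / n := by
    rw [show lam * Varn / n = lam * ((n * Varn) / n ^ 2) by field_simp,
      Real.sqrt_mul hlam.le, Real.sqrt_div hA.le, Real.sqrt_sq hn0.le, hsAdef]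
    ring
  constructor
  · -- membership
    set c : ℝ := Real.sqrt lam / (n * sA) with hc
    refine ⟨fun i => 1 / n + c * (f i - fbar), ?_, ?_, ?_, ?_⟩
    · intro i
      have h := hmin i
      have e : c * (f i - fbar) = (Real.sqrt lam * (f i - fbar) / sA) / n := by
        rw [hc, div_mul_eq_mul_div, div_div, mul_comm (n:ℝ) sA]
      show 0 ≤ 1 / (n:ℝ) + c * (f i - fbar)
      rw [e]
      have h1 : 0 ≤ (1 + Real.sqrt lam * (f i - fbar) / sA) / n :=
        div_nonneg (by linarith) hn0.le
      have h2 : (1 + Real.sqrt lam * (f i - fbar) / sA) / n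
          = 1 / n + (Real.sqrt lam * (f i - fbar) / sA) / n := by ring
      linarith [h2 ▸ h1]
    · rw [Finset.sum_add_distrib, ← Finset.mul_sum, hsum_dev, Finset.sum_const,
        card_univ, Fintype.card_fin]
      rw [nsmul_eq_mul]; push_cast; field_simp; ring
    · have e : ∑ i, (1 / (n:ℝ) + c * (f i - fbar) - 1 / n) ^ 2 = c ^ 2 * (n * Varn) := by
        have : ∀ i, (1 / (n:ℝ) + c * (f i - fbar) - 1 / n) ^ 2 = c ^ 2 * (f i - fbar) ^ 2 := by
          intro i; ring
        rw [Finset.sum_congr rfl fun i _ => this i, ← Finset.mul_sum, hsum_sq]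
      rw [e, hc, div_pow, mul_pow, hlsq, hsAsq]
      rw [show lam / ((n:ℝ) ^ 2 * (n * Varn)) * (n * Varn) = lam / n ^ 2 * ((n * Varn) / (n * Varn)) by ring,
        div_self hA.ne']
      simp
    · have hfdev : ∑ i, (f i - fbar) * f i = n * Varn := by
        have e : ∀ i, (f i - fbar) * f i = (f i - fbar) ^ 2 + fbar * (f i - fbar) := by
          intro i; ring
        rw [Finset.sum_congr rfl fun i _ => e i, Finset.sum_add_distrib, hsum_sq,
          ← Finset.mul_sum, hsum_dev]
        ring
      have e : ∑ i, (1 / (n:ℝ) + c * (f i - fbar)) * f i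
          = (1 / n) * ∑ i, f i + c * ∑ i, (f i - fbar) * f i := by
        rw [Finset.mul_sum, Finset.mul_sum, ← Finset.sum_add_distrib]
        exact Finset.sum_congr rfl fun i _ => by ring
      rw [e, hsum_f, hfdev, hsqrt_eq, hc]
      field_simp
      linear_combination (Real.sqrt lam) * hsAsq
  · -- upper bound
    rintro s ⟨p, hp0, hp1, hp2, hs⟩
    have hdev : ∑ i, (p i - 1 / n) * (f i - fbar) = s - fbar := by
      have e : ∀ i, (p i - 1 / (n:ℝ)) * (f i - fbar)
          = p i * f i - fbar * p i - (1 / n) * f i + fbar * (1 / n) := by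
        intro i; ring
      rw [Finset.sum_congr rfl fun i _ => e i]
      rw [Finset.sum_add_distrib, Finset.sum_sub_distrib, Finset.sum_sub_distrib,
        ← Finset.mul_sum, ← Finset.mul_sum, hp1, hsum_f, Finset.sum_const,
        card_univ, Fintype.card_fin, hs]
      rw [nsmul_eq_mul]
      push_cast
      field_simp
      ring
    have cs := Real.sum_mul_le_sqrt_mul_sqrt Finset.univ
      (fun i => p i - 1 / n) (fun i => f i - fbar)
    have h1 : Real.sqrt (∑ i, (p i - 1 / (n:ℝ)) ^ 2) ≤ Real.sqrt lam / n := by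
      have := Real.sqrt_le_sqrt hp2
      rwa [Real.sqrt_div hlam.le, Real.sqrt_sq hn0.le] at this
    have h2 : Real.sqrt (∑ i, (f i - fbar) ^ 2) = sA := by rw [hsum_sq]
    have hnn : 0 ≤ Real.sqrt (∑ i, (f i - fbar) ^ 2) := Real.sqrt_nonneg _
    have key : s - fbar ≤ (Real.sqrt lam / n) * sA := by
      calc s - fbar = ∑ i, (p i - 1 / (n:ℝ)) * (f i - fbar) := hdev.symm
        _ ≤ Real.sqrt (∑ i, (p i - 1 / (n:ℝ)) ^ 2) * Real.sqrt (∑ i, (f i - fbar) ^ 2) := cs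
        _ ≤ (Real.sqrt lam / n) * sA := by
            rw [h2]; exact mul_le_mul_of_nonneg_right h1 hsA.le
    rw [hsqrt_eq]
    have : Real.sqrt lam * sA / n = Real.sqrt lam / n * sA := by ring
    linarith [this ▸ key]
end

section
/- Let Y₁,...,Yₙ be i.i.d. random variables in [0,1] with population variance σ² > 0. Suppose n ≥ max(2, (λ/σ²)·max(8σ, 44)). Then with probability at least 1 − exp(−7nσ²/20), the empirical variance satisfies Varₙ ≥ λ/n. -/
open MeasureTheory ProbabilityTheory Finset

section Aux

lemma exp_convex_bound {θ u : ℝ} (h0 : 0 ≤ u) (h1 : u ≤ 1) :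
    Real.exp (-(θ * u)) ≤ 1 - (1 - Real.exp (-θ)) * u := by
  have h := convexOn_exp.2 (Set.mem_univ (0:ℝ)) (Set.mem_univ (-θ))
    (by linarith : (0:ℝ) ≤ 1 - u) h0 (by ring)
  simp only [smul_eq_mul, mul_zero, zero_add, mul_neg, Real.exp_zero] at h
  rw [mul_comm θ u]
  nlinarith [h]

lemma integral_exp_le (ν : Measure ℝ) [IsProbabilityMeasure ν] {u : ℝ → ℝ}
    (hu : Measurable u) (h01 : ∀ᵐ t ∂ν, u t ∈ Set.Icc (0:ℝ) 1) {θ : ℝ} (hθ : 0 ≤ θ) :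
    ∫ t, Real.exp (-(θ * u t)) ∂ν ≤ 1 - (1 - Real.exp (-θ)) * ∫ t, u t ∂ν := by
  have hui : Integrable u ν := by
    refine Integrable.mono' (integrable_const 1) hu.aestronglyMeasurable ?_
    exact h01.mono fun t ht => by rw [Real.norm_eq_abs, abs_le]; constructor <;> linarith [ht.1, ht.2]
  have hexp : Integrable (fun t => Real.exp (-(θ * u t))) ν := by
    refine Integrable.mono' (integrable_const 1)
      ((Real.continuous_exp.measurable.comp ((measurable_const.mul hu).neg)).aestronglyMeasurable) ?_
    refine h01.mono fun t ht => ?_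
    rw [Real.norm_eq_abs, abs_of_pos (Real.exp_pos _)]
    rw [show (1:ℝ) = Real.exp 0 by simp]
    exact Real.exp_le_exp.2 (by nlinarith [ht.1, ht.2])
  have hmono : ∫ t, Real.exp (-(θ * u t)) ∂ν ≤ ∫ t, (1 - (1 - Real.exp (-θ)) * u t) ∂ν := by
    refine integral_mono_ae hexp ((integrable_const 1).sub (hui.const_mul _)) ?_
    exact h01.mono fun t ht => exp_convex_bound ht.1 ht.2
  calc ∫ t, Real.exp (-(θ * u t)) ∂ν ≤ ∫ t, (1 - (1 - Real.exp (-θ)) * u t) ∂ν := hmono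
    _ = 1 - (1 - Real.exp (-θ)) * ∫ t, u t ∂ν := by
        rw [integral_sub (integrable_const 1) (hui.const_mul _), integral_const,
          integral_const_mul]
        simp

lemma integral_pi_pow {κ : Type*} [Fintype κ] (ν : Measure ℝ) [IsProbabilityMeasure ν] (f : ℝ → ℝ) :
    ∫ y : κ → ℝ, ∏ i, f (y i) ∂(Measure.pi fun _ => ν) = (∫ t, f t ∂ν) ^ (Fintype.card κ) := by
  letI : MeasureSpace ℝ := ⟨ν⟩
  haveI : SigmaFinite (volume : Measure ℝ) := inferInstanceAs (SigmaFinite ν)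
  exact MeasureTheory.integral_fintype_prod_eq_pow (ι := κ) f

lemma card_subtype_lt {n b : ℕ} (hb : b ≤ n) :
    Fintype.card {i : Fin n // (i : ℕ) < b} = b := by
  rw [Fintype.card_congr (⟨fun i => (⟨i.1, i.2⟩ : Fin b),
    fun j => ⟨⟨j.1, lt_of_lt_of_le j.2 hb⟩, j.2⟩,
    fun i => by ext; rfl, fun j => rfl⟩ : {i : Fin n // (i : ℕ) < b} ≃ Fin b)]
  exact Fintype.card_fin b

lemma log_four_le : Real.log 4 ≤ 1.39 := by
  have h4 : (4:ℝ) = 2^2 := by norm_num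
  rw [h4, Real.log_pow]
  have := Real.log_two_lt_d9
  push_cast
  nlinarith [this]

lemma exp_neg_34_le : Real.exp (-(3/4 : ℝ)) ≤ 0.48 := by
  have h3 : (Real.exp (-(3/4 : ℝ)))^4 = Real.exp (-3) := by
    rw [← Real.exp_nat_mul]
    norm_num
  have hexp3ge : (19:ℝ) ≤ Real.exp 3 := by
    have h1 : (2.7:ℝ) < Real.exp 1 := lt_trans (by norm_num) Real.exp_one_gt_d9
    have h2 : Real.exp 3 = (Real.exp 1)^3 := by
      rw [← Real.exp_nat_mul]
      norm_num
    calc (19:ℝ) ≤ 2.7^3 := by norm_num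
      _ ≤ (Real.exp 1)^3 := pow_le_pow_left₀ (by norm_num) h1.le 3
      _ = Real.exp 3 := h2.symm
  have hE4 : (Real.exp (-(3/4 : ℝ)))^4 ≤ (0.48:ℝ)^4 := by
    rw [h3, Real.exp_neg]
    rw [inv_le_comm₀ (by positivity) (by norm_num)]
    calc ((0.48:ℝ)^4)⁻¹ ≤ 19 := by norm_num
      _ ≤ Real.exp 3 := hexp3ge
  by_contra h
  push_neg at h
  nlinarith [pow_lt_pow_left₀ h (by norm_num : (0:ℝ) ≤ 0.48) (by norm_num : 4 ≠ 0)]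

end Aux

set_option maxHeartbeats 4000000 in

theorem empirical_variance_lower_bound_whp
    {Ω : Type*} [MeasurableSpace Ω] (μ : Measure Ω) [IsProbabilityMeasure μ]
    (n : ℕ) (hn2 : 2 ≤ n) (lam : ℝ) (hlam : 0 < lam)
    (Y : Fin n → Ω → ℝ) (hmeas : ∀ i, Measurable (Y i))
    (hbound : ∀ i ω, Y i ω ∈ Set.Icc (0 : ℝ) 1)
    (hindep : iIndepFun Y μ)
    (hident : ∀ i, μ.map (Y i) = μ.map (Y ⟨0, by omega⟩))
    (σ : ℝ) (hσ : 0 < σ) (hσ2 : σ ^ 2 = variance (Y ⟨0, by omega⟩) μ)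
    (hn : (n : ℝ) ≥ max 2 ((lam / σ ^ 2) * max (8 * σ) 44)) :
    ENNReal.ofReal (1 - Real.exp (-(7 * n * σ ^ 2) / 20)) ≤
      μ {ω | lam / n ≤ (∑ i, (Y i ω) ^ 2) / n - ((∑ i, Y i ω) / n) ^ 2} := by
  classical
  have hn0 : 0 < n := by omega
  set i0 : Fin n := ⟨0, by omega⟩ with hi0
  set ν : Measure ℝ := μ.map (Y i0) with hνdef
  haveI hνprob : IsProbabilityMeasure ν := Measure.isProbabilityMeasure_map (hmeas i0).aemeasurable
  have hae : ∀ᵐ t ∂ν, t ∈ Set.Icc (0:ℝ) 1 := by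
    exact (ae_map_iff (hmeas i0).aemeasurable measurableSet_Icc).2
      (ae_of_all _ fun ω => hbound i0 ω)
  -- integer bookkeeping
  set b : ℕ := n / 2 with hbdef
  set a : ℕ := n - b with hadef
  have hb1 : 1 ≤ b := by omega
  have hbn : b ≤ n := by omega
  have hba : b ≤ a := by omega
  have hbR : (0:ℝ) < b := by exact_mod_cast hb1
  have haR : (0:ℝ) < a := by
    have : 0 < a := by omega
    exact_mod_cast this
  have hn4b : (n:ℝ) ≤ 4 * b := by
    have : n ≤ 4 * b := by omega
    exact_mod_cast this
  have hn2a : (n:ℝ) ≤ 2 * a := by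
    have : n ≤ 2 * a := by omega
    exact_mod_cast this
  set p : Fin n → Prop := fun i => (i : ℕ) < b with hpdef
  have cardB : Fintype.card {i : Fin n // p i} = b := card_subtype_lt hbn
  have cardA : Fintype.card {i : Fin n // ¬ p i} = a := by
    rw [Fintype.card_subtype_compl, card_subtype_lt hbn, Fintype.card_fin]
  -- moments
  set m1 : ℝ := ∫ t, t ∂ν with hm1def
  set m2 : ℝ := ∫ t, t^2 ∂ν with hm2def
  have hid_int : Integrable (fun t : ℝ => t) ν := by
    refine Integrable.mono' (integrable_const 1) measurable_id.aestronglyMeasurable ?_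
    exact hae.mono fun t ht => by rw [Real.norm_eq_abs, abs_le]; constructor <;> linarith [ht.1, ht.2]
  have hsq_int : Integrable (fun t : ℝ => t^2) ν := by
    refine Integrable.mono' (integrable_const 1) (measurable_id.pow_const 2).aestronglyMeasurable ?_
    exact hae.mono fun t ht => by rw [Real.norm_eq_abs, abs_le]; constructor <;> nlinarith [ht.1, ht.2]
  have hsub_int : ∀ y : ℝ, Integrable (fun t : ℝ => (t - y)^2) ν := by
    intro y
    have : (fun t : ℝ => (t - y)^2) = fun t => t^2 - (2*y)*t + y^2 := funext fun t => by ring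
    rw [this]
    exact (hsq_int.sub (hid_int.const_mul _)).add (integrable_const _)
  have hm1mem : m1 ∈ Set.Icc (0:ℝ) 1 := by
    constructor
    · exact integral_nonneg_of_ae (hae.mono fun t ht => ht.1)
    · calc m1 ≤ ∫ _t, (1:ℝ) ∂ν := integral_mono_ae hid_int (integrable_const 1)
                (hae.mono fun t ht => ht.2)
        _ = 1 := by simp
  have hσm : σ^2 = m2 - m1^2 := by
    have hX2 : MemLp (Y i0) 2 μ := by
      refine MemLp.of_bound (hmeas i0).aestronglyMeasurable 1 (ae_of_all _ fun ω => ?_)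
      rw [Real.norm_eq_abs, abs_le]
      constructor <;> linarith [(hbound i0 ω).1, (hbound i0 ω).2]
    have h2 : m2 = ∫ ω, (Y i0 ω)^2 ∂μ := by
      rw [hm2def, hνdef]
      exact integral_map (hmeas i0).aemeasurable ((continuous_pow 2).aestronglyMeasurable)
    have h1 : m1 = ∫ ω, Y i0 ω ∂μ := by
      rw [hm1def, hνdef]
      exact integral_map (hmeas i0).aemeasurable continuous_id.aestronglyMeasurable
    rw [hσ2, variance_eq_sub hX2, h1, h2]
    simp [Pi.pow_apply]
  have hmom : ∀ y : ℝ, ∫ t, (t - y)^2 ∂ν = σ^2 + (y - m1)^2 := by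
    intro y
    have h1 : ∫ t, (t - y)^2 ∂ν = ∫ t, (t^2 - (2*y)*t + y^2) ∂ν :=
      integral_congr_ae (ae_of_all _ fun t => by ring)
    have h2 : ∫ t, (t^2 - (2*y)*t + y^2) ∂ν
        = (∫ t, (t^2 - (2*y)*t) ∂ν) + ∫ _t, y^2 ∂ν :=
      integral_add (hsq_int.sub (hid_int.const_mul _)) (integrable_const _)
    have h3 : ∫ t, (t^2 - (2*y)*t) ∂ν = m2 - (2*y) * m1 := by
      rw [integral_sub hsq_int (hid_int.const_mul _), integral_const_mul, ← hm1def, ← hm2def]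
    rw [h1, h2, h3, integral_const]
    simp only [probReal_univ, smul_eq_mul, one_mul]
    linear_combination -hσm
  have hσ2pos : 0 < σ^2 := by positivity
  have hσle1 : σ^2 ≤ 1 := by
    have hm2le : m2 ≤ 1 := by
      calc m2 ≤ ∫ _t, (1:ℝ) ∂ν := integral_mono_ae hsq_int (integrable_const 1)
                (hae.mono fun t ht => by show t^2 ≤ (1:ℝ); nlinarith [ht.1, ht.2])
        _ = 1 := by simp
    nlinarith [sq_nonneg m1]
  have hlamσ : 44 * lam ≤ n * σ^2 := by
    have h1 : lam / σ^2 * max (8*σ) 44 ≤ n := le_trans (le_max_right _ _) hn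
    have h2 : lam / σ^2 * 44 ≤ lam / σ^2 * max (8*σ) 44 :=
      mul_le_mul_of_nonneg_left (le_max_right _ _) (div_nonneg hlam.le hσ2pos.le)
    have h3 : lam / σ^2 * 44 ≤ n := le_trans h2 h1
    rw [div_mul_eq_mul_div, div_le_iff₀ hσ2pos] at h3
    linarith
  -- the pair-sum functional
  set F : (Fin n → ℝ) → ℝ :=
    fun x => ∑ i ∈ univ.filter (fun i => ¬ p i), ∑ j ∈ univ.filter p, (x i - x j)^2 with hFdef
  have hFmeas : Measurable F := by
    refine Finset.measurable_sum _ fun i _ => Finset.measurable_sum _ fun j _ => ?_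
    exact ((measurable_pi_apply i).sub (measurable_pi_apply j)).pow_const 2
  have hFnonneg : ∀ x, 0 ≤ F x := fun x => by positivity
  have hkey : ∀ x : Fin n → ℝ, F x ≤ n * (∑ i, (x i)^2) - (∑ i, x i)^2 := by
    intro x
    have htot : ∑ i : Fin n, ∑ j : Fin n, (x i - x j)^2
        = 2 * (n * (∑ i, (x i)^2) - (∑ i, x i)^2) := by
      have hij : ∀ i j : Fin n, (x i - x j)^2 = (x i)^2 + (x j)^2 - 2*(x i * x j) :=
        fun i j => by ring
      simp_rw [hij, Finset.sum_sub_distrib, Finset.sum_add_distrib, Finset.sum_const,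
        Finset.card_univ, Fintype.card_fin, ← Finset.mul_sum, ← Finset.sum_mul, nsmul_eq_mul]
      simp only [← Finset.mul_sum]
      ring
    have hsplit1 : ∑ i : Fin n, ∑ j : Fin n, (x i - x j)^2
        = (∑ i ∈ univ.filter p, ∑ j : Fin n, (x i - x j)^2)
          + ∑ i ∈ univ.filter (fun i => ¬ p i), ∑ j : Fin n, (x i - x j)^2 :=
      (Finset.sum_filter_add_sum_filter_not univ p _).symm
    have hge1 : F x ≤ ∑ i ∈ univ.filter (fun i => ¬ p i), ∑ j : Fin n, (x i - x j)^2 := by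
      refine Finset.sum_le_sum fun i _ => ?_
      exact Finset.sum_le_sum_of_subset_of_nonneg (Finset.filter_subset _ _)
        (fun j _ _ => by positivity)
    have hge2 : F x ≤ ∑ i ∈ univ.filter p, ∑ j : Fin n, (x i - x j)^2 := by
      have hswap : F x = ∑ i ∈ univ.filter p, ∑ j ∈ univ.filter (fun i => ¬ p i), (x i - x j)^2 := by
        rw [hFdef, Finset.sum_comm]
        refine Finset.sum_congr rfl fun i _ => Finset.sum_congr rfl fun j _ => ?_
        rw [← neg_sub, neg_sq]
      rw [hswap]
      refine Finset.sum_le_sum fun i _ => ?_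
      exact Finset.sum_le_sum_of_subset_of_nonneg (Finset.filter_subset _ _)
        (fun j _ _ => by positivity)
    linarith
  -- constants
  set L : ℝ := Real.log 4 with hLdef
  have hL0 : 0 ≤ L := Real.log_nonneg (by norm_num)
  have hL14 : L ≤ 1.39 := by rw [hLdef]; exact log_four_le
  set E34 : ℝ := Real.exp (-(3/4 : ℝ)) with hE34def
  have hE34pos : 0 < E34 := Real.exp_pos _
  have hE34le : E34 ≤ 0.48 := by rw [hE34def]; exact exp_neg_34_le
  set c : ℝ := L / b with hcdef
  have hc0 : 0 ≤ c := by positivity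
  set G : (Fin n → ℝ) → ℝ := fun x => Real.exp (-(c * F x)) with hGdef
  have hGmeas : Measurable G :=
    Real.continuous_exp.measurable.comp ((measurable_const.mul hFmeas).neg)
  -- the product measure
  set π : Measure (Fin n → ℝ) := Measure.pi (fun _ : Fin n => ν) with hπdef
  haveI hπprob : IsProbabilityMeasure π := by
    constructor
    rw [hπdef, ← Set.pi_univ Set.univ, Measure.pi_pi]
    simp
  -- joint law
  set J : Ω → (Fin n → ℝ) := fun ω i => Y i ω with hJdef
  have hJmeas : Measurable J := measurable_pi_lambda _ hmeas
  have hmap : μ.map J = π := by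
    rw [hπdef]
    refine (Measure.pi_eq fun s hs => ?_).symm
    rw [Measure.map_apply hJmeas (MeasurableSet.univ_pi hs)]
    have hpre : J ⁻¹' (Set.pi Set.univ s) = ⋂ i, Y i ⁻¹' s i := by
      ext ω; simp [hJdef, Set.mem_pi]
    rw [hpre, hindep.meas_iInter (fun i => ⟨s i, hs i, rfl⟩)]
    exact Finset.prod_congr rfl fun i _ => by
      rw [← Measure.map_apply (hmeas i) (hs i), hident i]
  -- MAIN integral bound
  have hIB : ∫ x, G x ∂π ≤ Real.exp (-(3/4 * a * σ^2) - b * (1 - E34) * σ^2) := by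
    haveI hprobB : IsProbabilityMeasure (Measure.pi fun _ : {i : Fin n // p i} => ν) := by
      constructor
      rw [← Set.pi_univ Set.univ, Measure.pi_pi]
      simp
    haveI hprobA : IsProbabilityMeasure (Measure.pi fun _ : {i : Fin n // ¬ p i} => ν) := by
      constructor
      rw [← Set.pi_univ Set.univ, Measure.pi_pi]
      simp
    set νB : Measure ({i : Fin n // p i} → ℝ) := Measure.pi fun _ => ν with hνBdef
    set νA : Measure ({i : Fin n // ¬ p i} → ℝ) := Measure.pi fun _ => ν with hνAdef
    set e' := MeasurableEquiv.piEquivPiSubtypeProd (fun _ : Fin n => ℝ) p with he'def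
    have hmp : MeasurePreserving e' π (νB.prod νA) :=
      measurePreserving_piEquivPiSubtypeProd (fun _ : Fin n => ν) p
    have hGint2 : Integrable (fun z => G (e'.symm z)) (νB.prod νA) := by
      refine Integrable.mono' (integrable_const 1)
        (hGmeas.comp e'.symm.measurable).aestronglyMeasurable (ae_of_all _ fun z => ?_)
      rw [Real.norm_eq_abs, abs_of_pos (Real.exp_pos _), show (1:ℝ) = Real.exp 0 by simp]
      exact Real.exp_le_exp.2
        (by nlinarith [hFnonneg (e'.symm z), hc0, mul_nonneg hc0 (hFnonneg (e'.symm z))])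
    have hstep1 : ∫ x, G x ∂π = ∫ z, G (e'.symm z) ∂(νB.prod νA) := by
      rw [← hmp.integral_comp' (fun z => G (e'.symm z))]
      refine integral_congr_ae (ae_of_all _ fun x => ?_)
      simp
    have hstep2 : ∫ z, G (e'.symm z) ∂(νB.prod νA)
        = ∫ yB, (∫ yA, G (e'.symm (yB, yA)) ∂νA) ∂νB := integral_prod _ hGint2
    have hprod : ∀ yB yA, G (e'.symm (yB, yA))
        = ∏ i : {i : Fin n // ¬ p i},
            Real.exp (-(L * ((∑ j : {i : Fin n // p i}, (yA i - yB j)^2) / b))) := by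
      intro yB yA
      have hcoordA : ∀ i : {i : Fin n // ¬ p i}, (e'.symm (yB, yA)) i.1 = yA i := by
        intro i
        show (Equiv.piEquivPiSubtypeProd p (fun _ : Fin n => ℝ)).symm (yB, yA) i.1 = yA i
        rw [Equiv.piEquivPiSubtypeProd_symm_apply, dif_neg i.2]
      have hcoordB : ∀ j : {i : Fin n // p i}, (e'.symm (yB, yA)) j.1 = yB j := by
        intro j
        show (Equiv.piEquivPiSubtypeProd p (fun _ : Fin n => ℝ)).symm (yB, yA) j.1 = yB j
        rw [Equiv.piEquivPiSubtypeProd_symm_apply, dif_pos j.2]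
      have hFv : F (e'.symm (yB, yA))
          = ∑ i : {i : Fin n // ¬ p i}, ∑ j : {i : Fin n // p i}, (yA i - yB j)^2 := by
        show (∑ i ∈ univ.filter (fun i => ¬ p i), ∑ j ∈ univ.filter p,
          ((e'.symm (yB, yA)) i - (e'.symm (yB, yA)) j)^2) = _
        rw [Finset.sum_subtype (p := fun i => ¬ p i) (univ.filter (fun i => ¬ p i)) (fun x => by simp)
          (fun i => ∑ j ∈ univ.filter p, ((e'.symm (yB, yA)) i - (e'.symm (yB, yA)) j)^2)]
        refine Finset.sum_congr rfl fun i _ => ?_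
        rw [Finset.sum_subtype (p := p) (univ.filter p) (fun x => by simp)
          (fun j => ((e'.symm (yB, yA)) i.1 - (e'.symm (yB, yA)) j)^2)]
        refine Finset.sum_congr rfl fun j _ => ?_
        rw [hcoordA i, hcoordB j]
      show Real.exp (-(c * F (e'.symm (yB, yA)))) = _
      rw [hFv, ← Real.exp_sum]
      congr 1
      have hterm : ∀ s : ℝ, -(L * (s / b)) = -(L / b * s) := fun s => by ring
      simp_rw [hterm]
      rw [Finset.sum_neg_distrib, ← Finset.mul_sum, hcdef]
    have hinner : ∀ yB, (∫ yA, G (e'.symm (yB, yA)) ∂νA)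
        = (∫ t, Real.exp (-(L * ((∑ j : {i : Fin n // p i}, (t - yB j)^2) / b))) ∂ν) ^ a := by
      intro yB
      have h1 : ∫ yA, G (e'.symm (yB, yA)) ∂νA
          = ∫ yA, (∏ i : {i : Fin n // ¬ p i},
              Real.exp (-(L * ((∑ j : {i : Fin n // p i}, (yA i - yB j)^2) / b)))) ∂νA :=
        integral_congr_ae (ae_of_all _ (hprod yB))
      rw [h1, hνAdef]
      calc ∫ yA : {i : Fin n // ¬ p i} → ℝ, (∏ i : {i : Fin n // ¬ p i},
              Real.exp (-(L * ((∑ j : {i : Fin n // p i}, (yA i - yB j)^2) / b))))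
              ∂(Measure.pi fun _ => ν)
          = (∫ t, Real.exp (-(L * ((∑ j : {i : Fin n // p i}, (t - yB j)^2) / b))) ∂ν)
              ^ (Fintype.card {i : Fin n // ¬ p i}) :=
            integral_pi_pow ν
              (fun t => Real.exp (-(L * ((∑ j : {i : Fin n // p i}, (t - yB j)^2) / b))))
        _ = (∫ t, Real.exp (-(L * ((∑ j : {i : Fin n // p i}, (t - yB j)^2) / b))) ∂ν) ^ a := by
            rw [cardA]
    have hIcc1 : ν (Set.Icc (0:ℝ) 1) = 1 := by
      have h0 : ν {t : ℝ | ¬ t ∈ Set.Icc (0:ℝ) 1} = 0 := ae_iff.1 hae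
      have h0' : ν (Set.Icc (0:ℝ) 1)ᶜ = 0 := h0
      have hadd := measure_add_measure_compl (μ := ν) (measurableSet_Icc (a := (0:ℝ)) (b := 1))
      rw [h0', add_zero, measure_univ] at hadd
      exact hadd
    have hgood : ∀ᵐ yB ∂νB, ∀ j, yB j ∈ Set.Icc (0:ℝ) 1 := by
      have hmeasS : MeasurableSet (Set.pi Set.univ fun _ : {i : Fin n // p i} => Set.Icc (0:ℝ) 1) :=
        MeasurableSet.univ_pi fun _ => measurableSet_Icc
      have h1 : νB (Set.pi Set.univ fun _ => Set.Icc (0:ℝ) 1) = 1 := by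
        rw [hνBdef, Measure.pi_pi]
        simp [hIcc1]
      rw [ae_iff]
      refine measure_mono_null ?_
        (show νB (Set.pi Set.univ fun _ => Set.Icc (0:ℝ) 1)ᶜ = 0 by
          rw [measure_compl hmeasS (measure_ne_top _ _), h1, measure_univ, tsub_self])
      intro yB h hmem
      exact h fun j => hmem j (Set.mem_univ j)
    have hq : ∀ yB : {i : Fin n // p i} → ℝ, (∀ j, yB j ∈ Set.Icc (0:ℝ) 1) →
        (∫ t, Real.exp (-(L * ((∑ j : {i : Fin n // p i}, (t - yB j)^2) / b))) ∂ν) ^ a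
          ≤ Real.exp (-(3/4 * a * σ^2))
            * ∏ j : {i : Fin n // p i}, Real.exp (-(3 * a / (4 * b) * (yB j - m1)^2)) := by
      intro yB hyB
      set u : ℝ → ℝ := fun t => (∑ j : {i : Fin n // p i}, (t - yB j)^2) / b with hudef
      have humeas : Measurable u :=
        (Finset.measurable_sum _ fun j _ => (measurable_id.sub_const _).pow_const 2).div_const _
      have hu01 : ∀ᵐ t ∂ν, u t ∈ Set.Icc (0:ℝ) 1 := by
        refine hae.mono fun t ht => ?_
        have hsum0 : (0:ℝ) ≤ ∑ j : {i : Fin n // p i}, (t - yB j)^2 := by positivity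
        have hsumb : (∑ j : {i : Fin n // p i}, (t - yB j)^2) ≤ (b:ℝ) := by
          calc (∑ j : {i : Fin n // p i}, (t - yB j)^2)
              ≤ ∑ _j : {i : Fin n // p i}, (1:ℝ) :=
                Finset.sum_le_sum fun j _ => by
                  nlinarith [(hyB j).1, (hyB j).2, ht.1, ht.2]
            _ = (b:ℝ) := by rw [Finset.sum_const, Finset.card_univ, cardB, nsmul_eq_mul, mul_one]
        constructor
        · exact div_nonneg hsum0 hbR.le
        · rw [hudef]
          show (∑ j : {i : Fin n // p i}, (t - yB j)^2) / b ≤ 1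
          rw [div_le_one hbR]
          exact hsumb
      have hui : Integrable u ν := by
        refine Integrable.mono' (integrable_const 1) humeas.aestronglyMeasurable ?_
        exact hu01.mono fun t ht => by
          rw [Real.norm_eq_abs, abs_le]; constructor <;> linarith [ht.1, ht.2]
      have hqval : ∫ t, u t ∂ν
          = σ^2 + (∑ j : {i : Fin n // p i}, (yB j - m1)^2) / b := by
        rw [hudef]
        show (∫ t, (∑ j : {i : Fin n // p i}, (t - yB j)^2) / b ∂ν) = _
        rw [integral_div, integral_finset_sum _ fun j _ => hsub_int (yB j)]
        simp_rw [hmom]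
        rw [Finset.sum_add_distrib, Finset.sum_const, Finset.card_univ, cardB, nsmul_eq_mul]
        field_simp
      have hq0 : 0 ≤ ∫ t, u t ∂ν := integral_nonneg_of_ae (hu01.mono fun t ht => ht.1)
      have hq1 : ∫ t, u t ∂ν ≤ 1 := by
        calc ∫ t, u t ∂ν ≤ ∫ _t, (1:ℝ) ∂ν :=
              integral_mono_ae hui (integrable_const 1) (hu01.mono fun t ht => ht.2)
          _ = 1 := by simp
      have hJ1le : ∫ t, Real.exp (-(L * u t)) ∂ν ≤ 1 - 3/4 * ∫ t, u t ∂ν := by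
        have h1 := integral_exp_le ν humeas hu01 hL0
        have hexpL : Real.exp (-L) = 4⁻¹ := by
          rw [hLdef, Real.exp_neg, Real.exp_log (by norm_num : (0:ℝ) < 4)]
        rw [hexpL] at h1
        refine le_trans h1 (le_of_eq ?_)
        norm_num
      have hJ10 : 0 ≤ ∫ t, Real.exp (-(L * u t)) ∂ν :=
        integral_nonneg fun t => (Real.exp_pos _).le
      have hcast : (∫ t, Real.exp (-(L * ((∑ j : {i : Fin n // p i}, (t - yB j)^2) / b))) ∂ν)
          = ∫ t, Real.exp (-(L * u t)) ∂ν := rfl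
      rw [hcast]
      calc (∫ t, Real.exp (-(L * u t)) ∂ν) ^ a
          ≤ (1 - 3/4 * ∫ t, u t ∂ν) ^ a := pow_le_pow_left₀ hJ10 hJ1le a
        _ ≤ (Real.exp (-(3/4 * ∫ t, u t ∂ν))) ^ a := by
            refine pow_le_pow_left₀ (by linarith) ?_ a
            nlinarith [Real.add_one_le_exp (-(3/4 * ∫ t, u t ∂ν))]
        _ = Real.exp ((a:ℝ) * -(3/4 * ∫ t, u t ∂ν)) := by
            rw [Real.exp_nat_mul]
        _ = Real.exp (-(3/4 * a * σ^2))
            * ∏ j : {i : Fin n // p i}, Real.exp (-(3 * a / (4 * b) * (yB j - m1)^2)) := by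
            rw [← Real.exp_sum, ← Real.exp_add]
            congr 1
            rw [hqval]
            have hsum : ∑ j : {i : Fin n // p i}, -(3 * a / (4 * b) * (yB j - m1)^2)
                = -(3 * a / (4 * b) * ∑ j : {i : Fin n // p i}, (yB j - m1)^2) := by
              rw [Finset.sum_neg_distrib, ← Finset.mul_sum]
            rw [hsum]
            field_simp
            ring
    have hIint : Integrable (fun yB => ∫ yA, G (e'.symm (yB, yA)) ∂νA) νB :=
      hGint2.integral_prod_left
    have hRmeas : Measurable (fun yB : {i : Fin n // p i} → ℝ =>
        Real.exp (-(3/4 * a * σ^2))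
          * ∏ j : {i : Fin n // p i}, Real.exp (-(3 * a / (4 * b) * (yB j - m1)^2))) := by
      refine measurable_const.mul (Finset.measurable_prod _ fun j _ => ?_)
      exact Real.continuous_exp.measurable.comp
        ((measurable_const.mul (((measurable_pi_apply j).sub_const _).pow_const 2)).neg)
    have hRint : Integrable (fun yB : {i : Fin n // p i} → ℝ =>
        Real.exp (-(3/4 * a * σ^2))
          * ∏ j : {i : Fin n // p i}, Real.exp (-(3 * a / (4 * b) * (yB j - m1)^2))) νB := by
      refine Integrable.mono' (integrable_const 1) hRmeas.aestronglyMeasurable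
        (ae_of_all _ fun yB => ?_)
      rw [Real.norm_eq_abs, abs_of_pos (by positivity)]
      refine mul_le_one₀ (Real.exp_le_one_iff.2 (neg_nonpos.2 (by positivity))) (by positivity) ?_
      refine Finset.prod_le_one (fun j _ => (Real.exp_pos _).le) (fun j _ => ?_)
      exact Real.exp_le_one_iff.2 (neg_nonpos.2 (by positivity))
    have hθ2_0 : (0:ℝ) ≤ 3 * a / (4 * b) := by positivity
    have hbaR : (b:ℝ) ≤ a := Nat.cast_le.2 hba
    have hθ2_34 : (3/4:ℝ) ≤ 3 * a / (4 * b) := by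
      rw [le_div_iff₀ (by positivity)]
      nlinarith [hbaR]
    have hu2 : ∀ᵐ t ∂ν, (t - m1)^2 ∈ Set.Icc (0:ℝ) 1 :=
      hae.mono fun t ht => ⟨by positivity, by nlinarith [ht.1, ht.2, hm1mem.1, hm1mem.2]⟩
    have hJ2le : ∫ t, Real.exp (-(3 * a / (4 * b) * (t - m1)^2)) ∂ν ≤ 1 - (1 - E34) * σ^2 := by
      have h1 := integral_exp_le ν
        (show Measurable fun t : ℝ => (t - m1)^2 from (measurable_id.sub_const m1).pow_const 2)
        hu2 hθ2_0
      have h2 : ∫ t, (t - m1)^2 ∂ν = σ^2 := by rw [hmom m1]; simp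
      rw [h2] at h1
      have hE : Real.exp (-(3 * a / (4 * b))) ≤ E34 := by
        rw [hE34def]
        exact Real.exp_le_exp.2 (by linarith)
      refine le_trans h1 ?_
      nlinarith [hσ2pos.le]
    have hJ20 : 0 ≤ ∫ t, Real.exp (-(3 * a / (4 * b) * (t - m1)^2)) ∂ν :=
      integral_nonneg fun t => (Real.exp_pos _).le
    calc ∫ x, G x ∂π = ∫ yB, (∫ yA, G (e'.symm (yB, yA)) ∂νA) ∂νB := by rw [hstep1, hstep2]
      _ ≤ ∫ yB, (Real.exp (-(3/4 * a * σ^2))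
            * ∏ j : {i : Fin n // p i}, Real.exp (-(3 * a / (4 * b) * (yB j - m1)^2))) ∂νB := by
          refine integral_mono_ae hIint hRint ?_
          refine hgood.mono fun yB hyB => ?_
          show (∫ yA, G (e'.symm (yB, yA)) ∂νA) ≤ Real.exp (-(3/4 * a * σ^2))
            * ∏ j : {i : Fin n // p i}, Real.exp (-(3 * a / (4 * b) * (yB j - m1)^2))
          rw [hinner yB]
          exact hq yB hyB
      _ = Real.exp (-(3/4 * a * σ^2))
            * (∫ t, Real.exp (-(3 * a / (4 * b) * (t - m1)^2)) ∂ν) ^ b := by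
          rw [integral_const_mul]
          congr 1
          rw [hνBdef]
          calc ∫ yB : {i : Fin n // p i} → ℝ, (∏ j : {i : Fin n // p i},
                  Real.exp (-(3 * a / (4 * b) * (yB j - m1)^2))) ∂(Measure.pi fun _ => ν)
              = (∫ t, Real.exp (-(3 * a / (4 * b) * (t - m1)^2)) ∂ν)
                  ^ (Fintype.card {i : Fin n // p i}) :=
                integral_pi_pow ν (fun t => Real.exp (-(3 * a / (4 * b) * (t - m1)^2)))
            _ = (∫ t, Real.exp (-(3 * a / (4 * b) * (t - m1)^2)) ∂ν) ^ b := by rw [cardB]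
      _ ≤ Real.exp (-(3/4 * a * σ^2)) * Real.exp (-(b * (1 - E34) * σ^2)) := by
          refine mul_le_mul_of_nonneg_left ?_ (Real.exp_pos _).le
          calc (∫ t, Real.exp (-(3 * a / (4 * b) * (t - m1)^2)) ∂ν) ^ b
              ≤ (1 - (1 - E34) * σ^2) ^ b := pow_le_pow_left₀ hJ20 hJ2le b
            _ ≤ (Real.exp (-((1 - E34) * σ^2))) ^ b := by
                refine pow_le_pow_left₀ ?_ ?_ b
                · nlinarith [hE34pos, hσle1, hσ2pos.le]
                · nlinarith [Real.add_one_le_exp (-((1 - E34) * σ^2))]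
            _ = Real.exp ((b:ℝ) * -((1 - E34) * σ^2)) := by rw [Real.exp_nat_mul]
            _ = Real.exp (-(b * (1 - E34) * σ^2)) := by congr 1; ring
      _ = Real.exp (-(3/4 * a * σ^2) - b * (1 - E34) * σ^2) := by
          rw [← Real.exp_add]
          congr 1
  -- Chernoff
  have hT : π {x | F x < n * lam} ≤ ENNReal.ofReal (Real.exp (-(7 * n * σ^2) / 20)) := by
    set ε : ℝ := Real.exp (-(c * (n * lam))) with hεdef
    have hεpos : 0 < ε := Real.exp_pos _
    have hGint : Integrable G π := by
      refine Integrable.mono' (integrable_const 1) hGmeas.aestronglyMeasurable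
        (ae_of_all _ fun x => ?_)
      rw [Real.norm_eq_abs, abs_of_pos (Real.exp_pos _), show (1:ℝ) = Real.exp 0 by simp]
      exact Real.exp_le_exp.2 (by nlinarith [hFnonneg x, hc0, mul_nonneg hc0 (hFnonneg x)])
    have hmarkov := mul_meas_ge_le_integral_of_nonneg
      (ae_of_all _ fun x => (Real.exp_pos (-(c * F x))).le) hGint ε
    have hsubset : {x : Fin n → ℝ | F x < n * lam} ⊆ {x | ε ≤ G x} := by
      intro x hx
      simp only [Set.mem_setOf_eq] at hx ⊢
      rw [hGdef, hεdef]
      exact Real.exp_le_exp.2 (by nlinarith [mul_le_mul_of_nonneg_left hx.le hc0])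
    have h2 : (π {x | F x < n * lam}).toReal ≤ (π {x | ε ≤ G x}).toReal :=
      ENNReal.toReal_mono (measure_ne_top _ _) (measure_mono hsubset)
    have h3 : (π {x | ε ≤ G x}).toReal ≤ Real.exp (-(3/4 * a * σ^2) - b * (1 - E34) * σ^2) / ε := by
      rw [le_div_iff₀ hεpos]
      calc (π {x | ε ≤ G x}).toReal * ε = ε * (π {x | ε ≤ G x}).toReal := mul_comm _ _
        _ ≤ ∫ x, G x ∂π := hmarkov
        _ ≤ _ := hIB
    have h4 : Real.exp (-(3/4 * a * σ^2) - b * (1 - E34) * σ^2) / ε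
        ≤ Real.exp (-(7 * n * σ^2) / 20) := by
      have hdiv : Real.exp (-(3/4 * a * σ^2) - b * (1 - E34) * σ^2) / ε
          = Real.exp ((-(3/4 * a * σ^2) - b * (1 - E34) * σ^2) + c * (n * lam)) := by
        rw [hεdef, Real.exp_add, Real.exp_neg]
        field_simp
      rw [hdiv]
      refine Real.exp_le_exp.2 ?_
      have hc_bound : c * (n * lam) ≤ 1.39 / 11 * (n * σ^2) := by
        rw [hcdef, div_mul_eq_mul_div, div_le_iff₀ hbR]
        nlinarith [hlamσ, hn4b, hL14, hL0, hlam.le, hσ2pos.le, hbR.le,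
          mul_pos (Nat.cast_pos.2 hn0 : (0:ℝ) < n) hlam,
          mul_le_mul_of_nonneg_left hlamσ hL0,
          mul_le_mul_of_nonneg_right hn4b (mul_nonneg (Nat.cast_pos.2 hn0 : (0:ℝ) < n).le hσ2pos.le)]
      have h5 : (n:ℝ) * σ^2 ≤ 2 * a * σ^2 := by nlinarith [hσ2pos.le, hn2a]
      have h6 : (n:ℝ) * σ^2 ≤ 4 * b * σ^2 := by nlinarith [hσ2pos.le, hn4b]
      have h7 : (0.52:ℝ) * (b * σ^2) ≤ (1 - E34) * (b * σ^2) := by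
        refine mul_le_mul_of_nonneg_right (by linarith [hE34le]) ?_
        positivity
      nlinarith [hc_bound, h5, h6, h7]
    calc π {x | F x < n * lam}
        = ENNReal.ofReal ((π {x | F x < n * lam}).toReal) :=
          (ENNReal.ofReal_toReal (measure_ne_top _ _)).symm
      _ ≤ ENNReal.ofReal (Real.exp (-(7 * n * σ^2) / 20)) :=
          ENNReal.ofReal_le_ofReal (le_trans h2 (le_trans h3 h4))
  -- wrap up
  set S : Set (Fin n → ℝ) := {x | lam / n ≤ (∑ i, (x i)^2) / n - ((∑ i, x i) / n)^2} with hSdef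
  have hVmeas : Measurable fun x : Fin n → ℝ => (∑ i, (x i)^2) / n - ((∑ i, x i) / n)^2 := by
    refine Measurable.sub ?_ ?_
    · exact (Finset.measurable_sum _ fun i _ => (measurable_pi_apply i).pow_const 2).div_const _
    · exact ((Finset.measurable_sum _ fun i _ => measurable_pi_apply i).div_const _).pow_const 2
  have hSmeas : MeasurableSet S := measurableSet_le measurable_const hVmeas
  have hgoalset : {ω | lam / n ≤ (∑ i, (Y i ω)^2) / n - ((∑ i, Y i ω) / n)^2} = J ⁻¹' S := rfl
  rw [hgoalset, ← Measure.map_apply hJmeas hSmeas, hmap]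
  have hcompl : π Sᶜ ≤ ENNReal.ofReal (Real.exp (-(7 * n * σ^2) / 20)) := by
    refine le_trans (measure_mono ?_) hT
    intro x hx
    simp only [Set.mem_compl_iff, hSdef, Set.mem_setOf_eq, not_le] at hx
    simp only [Set.mem_setOf_eq]
    have hnR : (0:ℝ) < n := Nat.cast_pos.2 hn0
    have hid2 : (n:ℝ) * (∑ i, (x i)^2) - (∑ i, x i)^2
        = n^2 * ((∑ i, (x i)^2) / n - ((∑ i, x i) / n)^2) := by
      field_simp
    have hstep : (n:ℝ) * (∑ i, (x i)^2) - (∑ i, x i)^2 < n * lam := by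
      rw [hid2]
      calc (n:ℝ)^2 * ((∑ i, (x i)^2) / n - ((∑ i, x i) / n)^2)
          < n^2 * (lam / n) := by
            exact mul_lt_mul_of_pos_left hx (by positivity)
        _ = n * lam := by field_simp
    exact lt_of_le_of_lt (hkey x) hstep
  have hsum : π S + π Sᶜ = 1 := prob_add_prob_compl hSmeas
  calc ENNReal.ofReal (1 - Real.exp (-(7 * n * σ^2) / 20))
      = 1 - ENNReal.ofReal (Real.exp (-(7 * n * σ^2) / 20)) := by
        rw [ENNReal.ofReal_sub _ (Real.exp_pos _).le, ENNReal.ofReal_one]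
    _ ≤ 1 - π Sᶜ := tsub_le_tsub_left hcompl 1
    _ = π S := (ENNReal.eq_sub_of_add_eq (measure_ne_top _ _) hsum).symm
end

section
/- Let f₁,...,fₙ ∈ [0,1], n ≥ 2, and suppose the fᵢ are not all equal. Then for the maximizer p* of ∑pᵢfᵢ over {p : p ≥ 0, ∑pᵢ = 1, ‖p − 𝟙/n‖₂² ≤ λ/n²} with 0 < λ/n ≤ Varₙ, removing an index j with the strictly smallest score f_j and renormalizing the remaining weights strictly increases the maximum weight: max_{i ≠ j} p*ᵢ/(1 − p*_j) > max_i p*ᵢ whenever p*_j < 1. -/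
open Finset

theorem removing_lowest_score_increases_max_weight (n : ℕ) (hn : 2 ≤ n)
    (lam : ℝ) (hlam : 0 < lam)
    (f : Fin n → ℝ) (hf : ∀ i, f i ∈ Set.Icc (0 : ℝ) 1) (hne : ∃ i j, f i ≠ f j)
    (fbar : ℝ) (hfbar : fbar = (∑ i, f i) / n)
    (Varn : ℝ) (hVarn : Varn = (∑ i, (f i - fbar) ^ 2) / n)
    (hV : lam / n ≤ Varn)
    (p : Fin n → ℝ)
    (hp : ∀ i, p i = 1 / n + Real.sqrt lam * (f i - fbar) / (n * Real.sqrt (n * Varn)))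
    (j : Fin n) (hj : ∀ i, i ≠ j → f j < f i) (hpj : p j < 1)
    (hne' : (univ.erase j).Nonempty) :
    univ.sup' (univ_nonempty_iff.mpr ⟨j⟩) p <
      (univ.erase j).sup' hne' (fun i => p i / (1 - p j)) := by
  obtain ⟨i0, hi0mem⟩ := id hne'
  have hi0 : i0 ≠ j := Finset.ne_of_mem_erase hi0mem
  have hnpos : (0:ℝ) < n := by
    have : 0 < n := by omega
    exact_mod_cast this
  have hle : ∀ i : Fin n, f j ≤ f i := by
    intro i
    by_cases hij : i = j
    · simp [hij]
    · exact (hj i hij).le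
  -- f j < fbar
  have hsum : (n:ℝ) * f j < ∑ i, f i := by
    have h := Finset.sum_lt_sum (f := fun _ : Fin n => f j) (g := f)
      (fun i _ => hle i) ⟨i0, Finset.mem_univ i0, hj i0 hi0⟩
    simpa [Finset.sum_const, Finset.card_univ, mul_comm] using h
  have hfj_lt : f j < fbar := by
    rw [hfbar, lt_div_iff₀ hnpos]; linarith
  -- fbar < 1
  have hfj1 : f j < 1 := lt_of_lt_of_le (hj i0 hi0) (hf i0).2
  have hsum1 : ∑ i, f i < n := by
    have h := Finset.sum_lt_sum (f := f) (g := fun _ : Fin n => (1:ℝ))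
      (fun i _ => (hf i).2) ⟨j, Finset.mem_univ j, hfj1⟩
    simpa [Finset.sum_const, Finset.card_univ] using h
  have hfbar1 : fbar < 1 := by
    rw [hfbar, div_lt_one hnpos]; exact hsum1
  have hfj0 : 0 ≤ f j := (hf j).1
  -- S := sum of squares
  set S : ℝ := ∑ i, (f i - fbar) ^ 2 with hSdef
  have hS : (n:ℝ) * Varn = S := by
    rw [hVarn]; field_simp
  have hSpos : 0 < S := by
    have h1 : (f j - fbar) ^ 2 ≤ S := by
      exact Finset.single_le_sum (f := fun i => (f i - fbar) ^ 2)
        (fun i _ => sq_nonneg _) (Finset.mem_univ j)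
    nlinarith [sq_nonneg (f j - fbar)]
  have hlamS : lam ≤ S := by
    have := (div_le_iff₀ hnpos).mp hV
    nlinarith
  set R : ℝ := Real.sqrt (n * Varn) with hRdef
  have hsqS : 0 < R := by
    rw [hRdef, hS]; exact Real.sqrt_pos.mpr hSpos
  -- key inequality
  have hkey : Real.sqrt lam * (fbar - f j) < R := by
    have hb : (fbar - f j) ^ 2 < 1 := by nlinarith
    have h1 : lam * (fbar - f j) ^ 2 < S := by nlinarith
    have h2 : Real.sqrt (lam * (fbar - f j) ^ 2) < Real.sqrt S :=
      Real.sqrt_lt_sqrt (by positivity) h1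
    have h3 : Real.sqrt (lam * (fbar - f j) ^ 2)
        = Real.sqrt lam * (fbar - f j) := by
      rw [Real.sqrt_mul hlam.le, Real.sqrt_sq (by linarith)]
    rw [hRdef, hS]; rw [h3] at h2; exact h2
  -- p j > 0
  have hpjpos : 0 < p j := by
    rw [hp j]
    have hx : 0 < R + Real.sqrt lam * (f j - fbar) := by nlinarith
    have heq : 1 / (n:ℝ) + Real.sqrt lam * (f j - fbar) / (n * R)
        = (R + Real.sqrt lam * (f j - fbar)) / (n * R) := by
      field_simp
    rw [heq]
    exact div_pos hx (by positivity)
  -- monotonicity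
  have hmono : ∀ i : Fin n, i ≠ j → p j < p i := by
    intro i hij
    rw [hp i, hp j]
    have hsl : 0 < Real.sqrt lam := Real.sqrt_pos.mpr hlam
    have hfji : f j < f i := hj i hij
    have hnum : Real.sqrt lam * (f j - fbar) < Real.sqrt lam * (f i - fbar) := by
      nlinarith
    have hd : 0 < (n:ℝ) * R := by positivity
    have := (div_lt_div_iff_of_pos_right hd).mpr hnum
    linarith
  -- sup argument
  obtain ⟨k, hkmem, hkL⟩ := Finset.exists_mem_eq_sup' (univ_nonempty_iff.mpr ⟨j⟩) p
  have hkj : k ≠ j := by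
    intro hkj
    have h1 : p i0 ≤ univ.sup' (univ_nonempty_iff.mpr ⟨j⟩) p :=
      Finset.le_sup' p (Finset.mem_univ i0)
    rw [hkL, hkj] at h1
    exact absurd h1 (not_le.mpr (hmono i0 hi0))
  have hLpos : 0 < p k := lt_trans hpjpos (hmono k hkj)
  have h1pj : 0 < 1 - p j := by linarith
  have hlt : p k < p k / (1 - p j) := by
    rw [lt_div_iff₀ h1pj]
    nlinarith
  have hle2 : p k / (1 - p j) ≤ (univ.erase j).sup' hne' (fun i => p i / (1 - p j)) :=
    Finset.le_sup' (fun i => p i / (1 - p j)) (Finset.mem_erase.mpr ⟨hkj, Finset.mem_univ k⟩)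
  rw [hkL]
  exact lt_of_lt_of_le hlt hle2
end
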